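/- arXiv:2106.09661 — 4 statements merged into one kernel-verified Lean document; each statement's English description precedes it below -/
import Mathlib

section
/- Let F ⊆ ℝ^m be closed, C ⊆ F compact, u, w ∈ S^{m-1} unit vectors, and δ > 0. Then the set K = ⋃{ℓ(p,v) : p ∈ C, v ∈ S^{m-1}, ℓ(p,v) ⊆ F, |⟨v,u⟩| ≥ δ, |⟨v,w⟩| ≥ δ} is closed, where ℓ(p,v) denotes the line through p with direction v. -/
open Set

/-- Let `F ⊆ ℝ^m` be closed, `C ⊆ F` compact, `u, w` unit vectors and
`δ > 0`. Then the union of all lines `ℓ(p,v)` with `p ∈ C`, `v` a unit vector,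
`ℓ(p,v) ⊆ F`, `|⟨v,u⟩| ≥ δ` and `|⟨v,w⟩| ≥ δ` is closed. -/
theorem stmt5 (m : ℕ) (F C : Set (EuclideanSpace ℝ (Fin m)))
    (hF : IsClosed F) (hC : IsCompact C) (hCF : C ⊆ F)
    (u w : EuclideanSpace ℝ (Fin m)) (hu : ‖u‖ = 1) (hw : ‖w‖ = 1)
    (δ : ℝ) (hδ : 0 < δ) :
    IsClosed {x : EuclideanSpace ℝ (Fin m) |
      ∃ p ∈ C, ∃ v : EuclideanSpace ℝ (Fin m), ‖v‖ = 1 ∧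
        {y | ∃ s : ℝ, y = p + s • v} ⊆ F ∧
        δ ≤ |(inner ℝ v u : ℝ)| ∧ δ ≤ |(inner ℝ v w : ℝ)| ∧
        ∃ s : ℝ, x = p + s • v} := by
  apply IsSeqClosed.isClosed
  intro X x hX hx
  choose p hp v hv hline hvu hvw s hs using hX
  -- extract convergent subsequence of p
  obtain ⟨p₀, hp₀, φ₁, hφ₁m, hφ₁⟩ := hC.tendsto_subseq hp
  -- extract convergent subsequence of v
  obtain ⟨v₀, hv₀, φ₂, hφ₂m, hφ₂⟩ :=
    (isCompact_sphere (0 : EuclideanSpace ℝ (Fin m)) 1).tendsto_subseq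
      (x := fun n => v (φ₁ n)) (fun n => mem_sphere_zero_iff_norm.2 (hv (φ₁ n)))
  -- bound on s
  obtain ⟨R1, hR1⟩ := isBounded_iff_forall_norm_le.1 hx.cauchySeq.isBounded_range
  obtain ⟨R2, hR2⟩ := isBounded_iff_forall_norm_le.1 hC.isBounded
  have hsb : ∀ n, s n ∈ Icc (-(R1 + R2)) (R1 + R2) := by
    intro n
    have h1 : |s n| = ‖X n - p n‖ := by
      rw [hs n]
      simp [norm_smul, hv n]
    have h2 : ‖X n - p n‖ ≤ R1 + R2 :=
      (norm_sub_le _ _).trans (add_le_add (hR1 (X n) ⟨n, rfl⟩) (hR2 _ (hp n)))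
    rw [← h1] at h2
    exact abs_le.1 h2
  obtain ⟨s₀, -, φ₃, hφ₃m, hφ₃⟩ :=
    (isCompact_Icc (a := -(R1 + R2)) (b := R1 + R2)).tendsto_subseq
      (x := fun n => s (φ₁ (φ₂ n))) (fun n => hsb _)
  set ψ : ℕ → ℕ := fun n => φ₁ (φ₂ (φ₃ n)) with hψ
  have hψm : StrictMono ψ := hφ₁m.comp (hφ₂m.comp hφ₃m)
  have hpψ : Filter.Tendsto (fun n => p (ψ n)) Filter.atTop (nhds p₀) :=
    hφ₁.comp ((hφ₂m.comp hφ₃m).tendsto_atTop)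
  have hvψ : Filter.Tendsto (fun n => v (ψ n)) Filter.atTop (nhds v₀) :=
    hφ₂.comp hφ₃m.tendsto_atTop
  have hsψ : Filter.Tendsto (fun n => s (ψ n)) Filter.atTop (nhds s₀) := hφ₃
  have hXψ : Filter.Tendsto (fun n => X (ψ n)) Filter.atTop (nhds x) :=
    hx.comp hψm.tendsto_atTop
  refine ⟨p₀, hp₀, v₀, mem_sphere_zero_iff_norm.1 hv₀, ?_, ?_, ?_, s₀, ?_⟩
  · -- line in F
    rintro y ⟨t, rfl⟩
    have htend : Filter.Tendsto (fun n => p (ψ n) + t • v (ψ n)) Filter.atTop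
        (nhds (p₀ + t • v₀)) := hpψ.add ((tendsto_const_nhds.smul hvψ))
    exact hF.mem_of_tendsto htend (Filter.Eventually.of_forall fun n =>
      hline (ψ n) ⟨t, rfl⟩)
  · have : Filter.Tendsto (fun n => |(inner ℝ (v (ψ n)) u : ℝ)|) Filter.atTop
        (nhds |(inner ℝ v₀ u : ℝ)|) := (hvψ.inner tendsto_const_nhds).abs
    exact ge_of_tendsto' this fun n => hvu (ψ n)
  · have : Filter.Tendsto (fun n => |(inner ℝ (v (ψ n)) w : ℝ)|) Filter.atTop
        (nhds |(inner ℝ v₀ w : ℝ)|) := (hvψ.inner tendsto_const_nhds).abs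
    exact ge_of_tendsto' this fun n => hvw (ψ n)
  · have htend : Filter.Tendsto (fun n => p (ψ n) + s (ψ n) • v (ψ n)) Filter.atTop
        (nhds (p₀ + s₀ • v₀)) := hpψ.add (hsψ.smul hvψ)
    have heq : (fun n => p (ψ n) + s (ψ n) • v (ψ n)) = fun n => X (ψ n) := by
      funext n; exact (hs (ψ n)).symm
    rw [heq] at htend
    exact tendsto_nhds_unique hXψ htend
end

section
/- Let T ⊆ ℝ^k be a Borel set with H^α(T) ≤ 1, let l ≥ 1, let A_l ⊆ T be H^α-measurable with a_l = H^α(A_l), and let ε > 0. Define A_l' = {y ∈ A_l : H^α(A_l ∩ closedBall(y, 2^{-l})) ≤ ε·a_l·H^α(T ∩ closedBall(y, 2^{-l}))}. Then H^α(A_l') ≤ c(k)·ε·a_l, where c(k) is the Besicovitch covering constant of ℝ^k. -/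
open MeasureTheory Set Metric
open scoped ENNReal NNReal

/-- There is a constant `c(k)` (the Besicovitch covering constant of
`ℝ^k`) such that: for `0 < α ≤ k`, `T ⊆ ℝ^k` Borel with `H^α(T) ≤ 1`, `l ≥ 1`,
`A_l ⊆ T` an `H^α`-measurable set with `a_l = H^α(A_l)`, and `ε > 0`, the set
`A_l' = {y ∈ A_l : H^α(A_l ∩ B̄(y, 2^{-l})) ≤ ε·a_l·H^α(T ∩ B̄(y, 2^{-l}))}`
satisfies `H^α(A_l') ≤ c(k)·ε·a_l`. -/
theorem stmt9 (k : ℕ) :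
    ∃ c : ℝ≥0, 0 < c ∧
      ∀ (α : ℝ), 0 < α → α ≤ k →
      ∀ T : Set (EuclideanSpace ℝ (Fin k)), MeasurableSet T → μH[α] T ≤ 1 →
      ∀ l : ℕ, 1 ≤ l →
      ∀ A : Set (EuclideanSpace ℝ (Fin k)), A ⊆ T →
        NullMeasurableSet A (μH[α] : Measure (EuclideanSpace ℝ (Fin k))) →
      ∀ ε : ℝ≥0, 0 < ε →
        μH[α] {y ∈ A |
            μH[α] (A ∩ closedBall y (1 / 2 ^ l)) ≤
              (ε : ℝ≥0∞) * μH[α] A * μH[α] (T ∩ closedBall y (1 / 2 ^ l))} ≤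
          (c : ℝ≥0∞) * (ε : ℝ≥0∞) * μH[α] A := by
  obtain ⟨N, τ, hτ, hN⟩ :=
    (inferInstance : HasBesicovitchCovering (EuclideanSpace ℝ (Fin k))).no_satelliteConfig
  refine ⟨N + 1, by positivity, ?_⟩
  intro α hα hαk T hT hT1 l hl A hAT hA ε hε
  set μ : Measure (EuclideanSpace ℝ (Fin k)) := μH[α] with hμ
  set r : ℝ := 1 / 2 ^ l with hrdef
  have hrpos : 0 < r := by positivity
  have hr1 : r ≤ 1 := by
    rw [hrdef]
    rw [div_le_one (by positivity)]
    exact one_le_pow₀ (by norm_num)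
  set A' := {y ∈ A | μ (A ∩ closedBall y r) ≤ ε * μ A * μ (T ∩ closedBall y r)} with hA'def
  -- build the ball package on `A'`
  let q : Besicovitch.BallPackage A' (EuclideanSpace ℝ (Fin k)) :=
    { c := fun x => (x : EuclideanSpace ℝ (Fin k)), r := fun _ => r, rpos := fun _ => hrpos,
      r_bound := 1, r_le := fun _ => hr1 }
  obtain ⟨s, hs_disj, hs_cov⟩ := Besicovitch.exist_disjoint_covering_families hτ hN q
  -- countability of each family
  have hcount : ∀ i : Fin N, (s i).Countable := by
    intro i
    refine Set.PairwiseDisjoint.countable_of_isOpen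
      (s := fun j : A' => ball (j : EuclideanSpace ℝ (Fin k)) r) ?_ (fun j _ => isOpen_ball)
      (fun j _ => ⟨(j : EuclideanSpace ℝ (Fin k)), mem_ball_self hrpos⟩)
    exact (hs_disj i).mono fun j => ball_subset_closedBall
  -- each family contributes at most `ε * μ A`
  have key : ∀ i : Fin N, μ (⋃ j ∈ s i, A ∩ closedBall (j : EuclideanSpace ℝ (Fin k)) r) ≤ ε * μ A := by
    intro i
    calc μ (⋃ j ∈ s i, A ∩ closedBall (j : EuclideanSpace ℝ (Fin k)) r)
        ≤ ∑' j : s i, μ (A ∩ closedBall ((j : A') : EuclideanSpace ℝ (Fin k)) r) :=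
          measure_biUnion_le μ (hcount i) _
      _ ≤ ∑' j : s i, (ε : ℝ≥0∞) * μ A * μ (T ∩ closedBall ((j : A') : EuclideanSpace ℝ (Fin k)) r) := by
          refine ENNReal.tsum_le_tsum fun j => ?_
          exact (j : A').2.2
      _ = (ε : ℝ≥0∞) * μ A * ∑' j : s i, μ (T ∩ closedBall ((j : A') : EuclideanSpace ℝ (Fin k)) r) := by
          rw [ENNReal.tsum_mul_left]
      _ = (ε : ℝ≥0∞) * μ A * μ (⋃ j ∈ s i, T ∩ closedBall ((j : A') : EuclideanSpace ℝ (Fin k)) r) := by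
          rw [measure_biUnion (hcount i) ?_ (fun j _ => hT.inter measurableSet_closedBall)]
          exact (hs_disj i).mono_on fun j _ => inter_subset_right
      _ ≤ (ε : ℝ≥0∞) * μ A * 1 := by
          refine mul_le_mul_right (le_trans (measure_mono ?_) hT1) _
          exact iUnion₂_subset fun j _ => inter_subset_left
      _ = (ε : ℝ≥0∞) * μ A := by rw [mul_one]
  -- covering of A'
  have hcov : A' ⊆ ⋃ i : Fin N, ⋃ j ∈ s i, A ∩ closedBall (j : EuclideanSpace ℝ (Fin k)) r := by
    intro y hy
    have : y ∈ range q.c := ⟨⟨y, hy⟩, rfl⟩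
    obtain ⟨i, hi⟩ := mem_iUnion.1 (hs_cov this)
    obtain ⟨j, hj, hyj⟩ := mem_iUnion₂.1 hi
    exact mem_iUnion.2 ⟨i, mem_iUnion₂.2 ⟨j, hj, hy.1, ball_subset_closedBall hyj⟩⟩
  have hbound : μ A' ≤ N * ((ε : ℝ≥0∞) * μ A) := by
    calc μ A' ≤ μ (⋃ i : Fin N, ⋃ j ∈ s i, A ∩ closedBall (j : EuclideanSpace ℝ (Fin k)) r) := measure_mono hcov
      _ ≤ ∑ i : Fin N, μ (⋃ j ∈ s i, A ∩ closedBall (j : EuclideanSpace ℝ (Fin k)) r) := measure_iUnion_fintype_le μ _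
      _ ≤ ∑ _i : Fin N, (ε : ℝ≥0∞) * μ A := Finset.sum_le_sum fun i _ => key i
      _ = N * ((ε : ℝ≥0∞) * μ A) := by simp [Finset.sum_const, nsmul_eq_mul]
  refine hbound.trans ?_
  have : ((N : ℝ≥0∞)) ≤ ((N + 1 : ℝ≥0) : ℝ≥0∞) := by
    push_cast
    exact le_self_add
  calc (N : ℝ≥0∞) * ((ε : ℝ≥0∞) * μ A) ≤ ((N + 1 : ℝ≥0) : ℝ≥0∞) * ((ε : ℝ≥0∞) * μ A) :=
        mul_le_mul_left this _
    _ = ((N + 1 : ℝ≥0) : ℝ≥0∞) * (ε : ℝ≥0∞) * μ A := by ring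
end

section
/- Let g : [0,1] → ℝ² satisfy the dimension-doubling property: dim g(X) = 2·dim X for every X ⊆ [0,1]. Let C = graph(g) = {(t, g(t)) : t ∈ [0,1]} ⊆ ℝ × ℝ². Then for every nonempty subset C' ⊆ C with the Fubini property, the projection of C' to the first coordinate has Hausdorff dimension 0. -/
open MeasureTheory Set
open scoped ENNReal NNReal

/-- Let `g : [0,1] → ℝ²` have the dimension-doubling property
`dim g(X) = 2 · dim X` for every `X ⊆ [0,1]`, and let `C = graph g ⊆ ℝ × ℝ²`.
Then every nonempty `C' ⊆ C` with the Fubini property (since `C'` is contained in a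
graph, all vertical sections are at most singletons, so the Fubini property reads
`dim C' = dim proj_ℝ C'`) has `dim proj_ℝ C' = 0`. -/
theorem stmt12 (g : ℝ → ℝ × ℝ)
    (hg : ∀ X ⊆ Icc (0 : ℝ) 1, dimH (g '' X) = 2 * dimH X)
    (C' : Set (ℝ × (ℝ × ℝ))) (hne : C'.Nonempty)
    (hsub : C' ⊆ {p : ℝ × (ℝ × ℝ) | p.1 ∈ Icc (0 : ℝ) 1 ∧ p.2 = g p.1})
    (hFubini : dimH C' = dimH (Prod.fst '' C')) :
    dimH (Prod.fst '' C') = 0 := by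
  set A : Set ℝ := Prod.fst '' C' with hA
  have hAsub : A ⊆ Icc (0 : ℝ) 1 := by
    rintro _ ⟨p, hp, rfl⟩
    exact (hsub hp).1
  have himg : g '' A = Prod.snd '' C' := by
    ext y
    constructor
    · rintro ⟨_, ⟨p, hp, rfl⟩, rfl⟩
      exact ⟨p, hp, (hsub hp).2⟩
    · rintro ⟨p, hp, rfl⟩
      exact ⟨p.1, ⟨p, hp, rfl⟩, ((hsub hp).2).symm⟩
  have hsnd : dimH (Prod.snd '' C') ≤ dimH C' :=
    LipschitzWith.dimH_image_le (LipschitzWith.prod_snd) C'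
  have h2 : 2 * dimH A ≤ dimH A := by
    calc 2 * dimH A = dimH (g '' A) := (hg A hAsub).symm
    _ = dimH (Prod.snd '' C') := by rw [himg]
    _ ≤ dimH C' := hsnd
    _ = dimH A := hFubini
  have hfin : dimH A ≤ 1 := by
    calc dimH A ≤ dimH (univ : Set ℝ) := dimH_mono (subset_univ _)
    _ = 1 := by simpa using Real.dimH_univ_eq_finrank ℝ
  have hlt : dimH A ≠ ⊤ := ne_top_of_le_ne_top (by norm_num) hfin
  by_contra h
  have hpos : 0 < dimH A := pos_iff_ne_zero.mpr h
  have : dimH A < 2 * dimH A := by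
    rw [two_mul]
    exact ENNReal.lt_add_right hlt h
  exact absurd h2 (not_le.mpr this)
end

section
/- Let 1 ≤ k < m, and let E be a nonempty collection of non-vertical k-dimensional affine subspaces of ℝ^m such that B = ⋃_{P ∈ E} P is Borel and, for Lebesgue-almost every t ∈ ℝ^k, dim B_t ≥ r where B_t = {x ∈ ℝ^{m-k} : (t,x) ∈ B}. Suppose moreover that every set B' ⊆ ℝ^m with H^k(B' ∩ P) > 0 for each P ∈ E satisfies dim B' ≥ k + dim E and that dim(⋃_{P∈E} P) ≤ k + dim E with dim E ≤ 1. If additionally ess-sup over t ∈ ℝ^k of dim B_t is at least dim E, then dim B = k + ess-sup_t dim B_t; that is, B has the Fubini property. -/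
open MeasureTheory Set
open scoped ENNReal NNReal


open Filter
open scoped Topology

section Aux

lemma graph_hausdorff_infinite (k n : ℕ) (hk : 1 ≤ k)
    (P : Set (EuclideanSpace ℝ (Fin k) × EuclideanSpace ℝ (Fin n)))
    (f : EuclideanSpace ℝ (Fin k) →ᵃ[ℝ] EuclideanSpace ℝ (Fin n))
    (hP : P = {p | p.2 = f p.1}) :
    μH[(k : ℝ)] P = ∞ := by
  have hd0 : (0:ℝ) ≤ (k:ℝ) := Nat.cast_nonneg k
  have hfst : (Prod.fst '' P : Set (EuclideanSpace ℝ (Fin k))) = univ := by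
    ext t
    simp only [mem_univ, iff_true, mem_image]
    exact ⟨(t, f t), by simp [hP], rfl⟩
  have h1 : μH[(k:ℝ)] (Prod.fst '' P) ≤ (1:ℝ≥0) ^ (k:ℝ) * μH[(k:ℝ)] P :=
    LipschitzWith.prod_fst.hausdorffMeasure_image_le hd0 P
  have h2 : (μH[(k:ℝ)] (univ : Set (EuclideanSpace ℝ (Fin k)))) = ∞ := by
    have hlip : LipschitzWith 1 (WithLp.equiv 2 (Fin k → ℝ)) := PiLp.lipschitzWith_ofLp 2 _
    have h3 : μH[(k:ℝ)] ((WithLp.equiv 2 (Fin k → ℝ)) '' univ) ≤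
        (1:ℝ≥0) ^ (k:ℝ) * μH[(k:ℝ)] (univ : Set (EuclideanSpace ℝ (Fin k))) :=
      hlip.hausdorffMeasure_image_le hd0 univ
    have h4 : ((WithLp.equiv 2 (Fin k → ℝ)) '' univ) = univ := by
      simp [(WithLp.equiv 2 (Fin k → ℝ)).surjective.range_eq ▸ image_univ]
      exact range_eq_univ.2 fun x => ⟨WithLp.toLp 2 x, rfl⟩
    have h5 : (μH[(k:ℝ)] : Measure (Fin k → ℝ)) univ = ∞ := by
      have hμ := hausdorffMeasure_pi_real (ι := Fin k)
      simp only [Fintype.card_fin] at hμ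
      rw [hμ, show (univ : Set (Fin k → ℝ)) = Set.pi univ (fun _ => univ) by simp,
        volume_pi_pi]
      simp only [Real.volume_univ, Finset.prod_const, Finset.card_univ, Fintype.card_fin]
      exact ENNReal.top_pow (by omega)
    rw [h4, h5] at h3
    simpa using (top_le_iff.1 h3)
  rw [hfst, h2] at h1
  simpa using (top_le_iff.1 h1)

lemma fubini_slice (k n : ℕ) {s : ℝ} (hs : 0 < s)
    (A : Set (EuclideanSpace ℝ (Fin k) × EuclideanSpace ℝ (Fin n)))
    (hA : μH[((k : ℝ) + s)] A = 0) :
    ∀ᵐ t ∂(volume : Measure (EuclideanSpace ℝ (Fin k))),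
      μH[s] {x : EuclideanSpace ℝ (Fin n) | (t, x) ∈ A} = 0 := by
  classical
  set d : ℝ := (k : ℝ) + s with hdd
  have hd : 0 < d := by positivity
  have key : ∀ j : ℕ, ∃ U : ℕ → Set (EuclideanSpace ℝ (Fin k) × EuclideanSpace ℝ (Fin n)),
      (A ⊆ ⋃ i, U i) ∧ (∀ i, EMetric.diam (U i) ≤ 1) ∧
      ∑' i, EMetric.diam (U i) ^ d ≤ (2:ℝ≥0∞)⁻¹ ^ j := by
    intro j
    have hεpos : (0:ℝ≥0∞) < (2:ℝ≥0∞)⁻¹ ^ j :=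
      ENNReal.pow_pos (ENNReal.inv_pos.2 ENNReal.ofNat_ne_top) j
    have hinf : (⨅ (t : ℕ → Set (EuclideanSpace ℝ (Fin k) × EuclideanSpace ℝ (Fin n)))
        (_ : A ⊆ ⋃ i, t i) (_ : ∀ i, EMetric.diam (t i) ≤ 1),
        ∑' i, ⨆ _ : (t i).Nonempty, EMetric.diam (t i) ^ d) ≤ μH[d] A := by
      rw [Measure.hausdorffMeasure_apply]
      exact le_iSup₂ (f := fun (r : ℝ≥0∞) (_ : 0 < r) =>
        ⨅ (t : ℕ → Set (EuclideanSpace ℝ (Fin k) × EuclideanSpace ℝ (Fin n)))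
          (_ : A ⊆ ⋃ i, t i) (_ : ∀ i, EMetric.diam (t i) ≤ r),
          ∑' i, ⨆ _ : (t i).Nonempty, EMetric.diam (t i) ^ d) 1 one_pos
    rw [hA] at hinf
    have hlt := lt_of_le_of_lt hinf hεpos
    rw [iInf_lt_iff] at hlt
    obtain ⟨U, hU⟩ := hlt
    rw [iInf_lt_iff] at hU
    obtain ⟨hU1, hU⟩ := hU
    rw [iInf_lt_iff] at hU
    obtain ⟨hU2, hU⟩ := hU
    refine ⟨U, hU1, hU2, le_trans (ENNReal.tsum_le_tsum fun i => ?_) hU.le⟩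
    rcases eq_empty_or_nonempty (U i) with h | h
    · simp [h, EMetric.diam, Metric.ediam_empty, ENNReal.zero_rpow_of_pos hd]
    · exact le_iSup (fun _ : (U i).Nonempty => EMetric.diam (U i) ^ d) h
  choose U hUcov hUdiam hUsum using key
  have hUfin : ∀ j i, EMetric.diam (U j i) ≠ ∞ := fun j i =>
    (lt_of_le_of_lt (hUdiam j i) ENNReal.one_lt_top).ne
  set c : ℕ → ℕ → EuclideanSpace ℝ (Fin k) := fun j i =>
    if h : (U j i).Nonempty then h.some.1 else 0 with hc
  set g : ℕ → ℕ → EuclideanSpace ℝ (Fin k) → ℝ≥0∞ := fun j i =>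
    (Metric.closedBall (c j i) ((EMetric.diam (U j i)).toReal)).indicator
      (fun _ => EMetric.diam (U j i) ^ s) with hg
  have hgmeas : ∀ j i, Measurable (g j i) := fun j i =>
    measurable_const.indicator measurableSet_closedBall
  set C : ℝ≥0∞ := volume (Metric.closedBall (0 : EuclideanSpace ℝ (Fin k)) 1) with hC
  have hClt : C < ∞ := measure_closedBall_lt_top
  have hint : ∀ j i, ∫⁻ t, g j i t ∂volume ≤ C * EMetric.diam (U j i) ^ d := by
    intro j i
    rw [hg, lintegral_indicator_const measurableSet_closedBall]
    rcases eq_or_ne (EMetric.diam (U j i)) 0 with h0 | h0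
    · simp [h0, ENNReal.zero_rpow_of_pos hs]
    · have hvol : volume (Metric.closedBall (c j i) ((EMetric.diam (U j i)).toReal))
          = EMetric.diam (U j i) ^ (k:ℝ) * C := by
        rw [Measure.addHaar_closedBall' volume _ ENNReal.toReal_nonneg, hC]
        congr 1
        rw [finrank_euclideanSpace_fin, ENNReal.ofReal_pow ENNReal.toReal_nonneg,
          ENNReal.ofReal_toReal (hUfin j i), ← ENNReal.rpow_natCast]
      rw [hvol, ← mul_assoc, ← ENNReal.rpow_add _ _ h0 (hUfin j i), mul_comm]
      rw [hdd, add_comm]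
  set G : EuclideanSpace ℝ (Fin k) → ℝ≥0∞ := fun t => ∑' j, ∑' i, g j i t with hG
  have hGmeas : Measurable G :=
    Measurable.ennreal_tsum fun j => Measurable.ennreal_tsum (hgmeas j)
  have hGint : ∫⁻ t, G t ∂volume < ∞ := by
    have heq : ∫⁻ t, G t ∂volume = ∑' j, ∑' i, ∫⁻ t, g j i t ∂volume := by
      rw [hG, lintegral_tsum (fun j => (Measurable.ennreal_tsum (hgmeas j)).aemeasurable)]
      exact tsum_congr fun j => lintegral_tsum (fun i => (hgmeas j i).aemeasurable)
    rw [heq]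
    calc ∑' j, ∑' i, ∫⁻ t, g j i t ∂volume
        ≤ ∑' (j : ℕ), C * (2:ℝ≥0∞)⁻¹ ^ j := by
          refine ENNReal.tsum_le_tsum fun j => ?_
          calc ∑' i, ∫⁻ t, g j i t ∂volume
              ≤ ∑' i, C * EMetric.diam (U j i) ^ d := ENNReal.tsum_le_tsum (hint j)
            _ = C * ∑' i, EMetric.diam (U j i) ^ d := ENNReal.tsum_mul_left
            _ ≤ C * (2:ℝ≥0∞)⁻¹ ^ j := mul_le_mul_right (hUsum j) C
      _ = C * ∑' (j : ℕ), (2:ℝ≥0∞)⁻¹ ^ j := ENNReal.tsum_mul_left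
      _ < ∞ := by
          rw [ENNReal.tsum_geometric]
          refine ENNReal.mul_lt_top hClt ?_
          simp [ENNReal.sub_half]
  have haefin : ∀ᵐ t ∂(volume : Measure (EuclideanSpace ℝ (Fin k))), G t < ∞ :=
    ae_lt_top hGmeas hGint.ne
  filter_upwards [haefin] with t ht
  have htend : Tendsto (fun j => ∑' i, g j i t) atTop (𝓝 0) :=
    ENNReal.tendsto_atTop_zero_of_tsum_ne_top ht.ne
  set V : ℕ → ℕ → Set (EuclideanSpace ℝ (Fin n)) := fun j i => {x | (t, x) ∈ U j i} with hV
  have hVdiam : ∀ j i, EMetric.diam (V j i) ≤ EMetric.diam (U j i) := by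
    intro j i
    apply EMetric.diam_le
    intro x hx y hy
    have hxy : edist x y
        = edist ((t, x) : EuclideanSpace ℝ (Fin k) × EuclideanSpace ℝ (Fin n)) (t, y) := by
      rw [Prod.edist_eq]; simp
    rw [hxy]
    exact EMetric.edist_le_diam_of_mem hx hy
  have hUdiam' : ∀ j i, EMetric.diam (U j i) ≤ ((2:ℝ≥0∞)⁻¹ ^ j) ^ (1/d) := by
    intro j i
    have h1 : EMetric.diam (U j i) ^ d ≤ (2:ℝ≥0∞)⁻¹ ^ j :=
      le_trans (ENNReal.le_tsum i) (hUsum j)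
    have h2 := ENNReal.rpow_le_rpow h1 (by positivity : (0:ℝ) ≤ 1/d)
    rwa [← ENNReal.rpow_mul, mul_one_div, div_self hd.ne', ENNReal.rpow_one] at h2
  have hrt : Tendsto (fun j : ℕ => ((2:ℝ≥0∞)⁻¹ ^ j) ^ (1/d)) atTop (𝓝 0) := by
    have h1 : Tendsto (fun j : ℕ => (2:ℝ≥0∞)⁻¹ ^ j) atTop (𝓝 0) :=
      ENNReal.tendsto_pow_atTop_nhds_zero_of_lt_one
        (by simpa using ENNReal.half_lt_self one_ne_zero ENNReal.one_ne_top)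
    have h2 := (ENNReal.continuous_rpow_const (y := 1/d)).tendsto 0
    rw [ENNReal.zero_rpow_of_pos (by positivity)] at h2
    exact h2.comp h1
  have hcov : ∀ j, {x : EuclideanSpace ℝ (Fin n) | (t, x) ∈ A} ⊆ ⋃ i, V j i := by
    intro j x hx
    obtain ⟨i, hi⟩ := mem_iUnion.1 (hUcov j hx)
    exact mem_iUnion.2 ⟨i, hi⟩
  have hmain := Measure.hausdorffMeasure_le_liminf_tsum s
    {x : EuclideanSpace ℝ (Fin n) | (t, x) ∈ A}
    (fun j : ℕ => ((2:ℝ≥0∞)⁻¹ ^ j) ^ (1/d)) hrt V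
    (Eventually.of_forall fun j i => le_trans (hVdiam j i) (hUdiam' j i))
    (Eventually.of_forall hcov)
  refine le_antisymm (le_trans hmain ?_) (zero_le)
  have hbound : ∀ j i, EMetric.diam (V j i) ^ s ≤ g j i t := by
    intro j i
    rcases eq_empty_or_nonempty (V j i) with h | h
    · simp [h, EMetric.diam, Metric.ediam_empty, ENNReal.zero_rpow_of_pos hs]
    · obtain ⟨x, hx⟩ := h
      have hUne : (U j i).Nonempty := ⟨(t, x), hx⟩
      have hcball : t ∈ Metric.closedBall (c j i) ((EMetric.diam (U j i)).toReal) := by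
        have hcval : c j i = hUne.some.1 := by rw [hc]; exact dif_pos hUne
        have hedist : edist t (c j i) ≤ EMetric.diam (U j i) := by
          rw [hcval]
          calc edist t hUne.some.1
              ≤ edist ((t, x) : EuclideanSpace ℝ (Fin k) × EuclideanSpace ℝ (Fin n))
                  hUne.some := by
                rw [Prod.edist_eq]; exact le_max_left _ _
            _ ≤ EMetric.diam (U j i) := EMetric.edist_le_diam_of_mem hx hUne.some_mem
        rw [Metric.mem_closedBall, dist_edist]
        exact ENNReal.toReal_mono (hUfin j i) hedist
      rw [hg]
      simp only [indicator_of_mem hcball]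
      exact ENNReal.rpow_le_rpow (hVdiam j i) hs.le
  calc liminf (fun j => ∑' i, EMetric.diam (V j i) ^ s) atTop
      ≤ liminf (fun j => ∑' i, g j i t) atTop :=
        liminf_le_liminf (Eventually.of_forall fun j => ENNReal.tsum_le_tsum (hbound j))
    _ = 0 := htend.liminf_eq

end Aux

/-- Let `E` be a nonempty family of non-vertical `k`-dimensional affine
subspaces of `ℝ^m = ℝ^k × ℝ^{m-k}` (each such subspace being the graph of an affine map
`ℝ^k → ℝ^{m-k}`), with `B = ⋃ E` Borel and `dim B_t ≥ dim E` for Lebesgue-a.e. `t`.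
Suppose every `B'` with `H^k(B' ∩ P) > 0` for all `P ∈ E` satisfies
`dim B' ≥ k + dim E`, that `dim B ≤ k + dim E` with `dim E ≤ 1`, and that the essential
supremum `β` of `t ↦ dim B_t` is `≥ dim E`. Then `dim B = k + β` (the Fubini property).
Here `e` plays the role of `dim E`. -/
theorem stmt14 (k n : ℕ) (hk : 1 ≤ k) (hn : 1 ≤ n)
    (E : Set (Set (EuclideanSpace ℝ (Fin k) × EuclideanSpace ℝ (Fin n))))
    (hEne : E.Nonempty)
    (hgraph : ∀ P ∈ E, ∃ f : EuclideanSpace ℝ (Fin k) →ᵃ[ℝ] EuclideanSpace ℝ (Fin n),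
      P = {p | p.2 = f p.1})
    (B : Set (EuclideanSpace ℝ (Fin k) × EuclideanSpace ℝ (Fin n)))
    (hBdef : B = ⋃₀ E) (hBmeas : MeasurableSet B)
    (e : ℝ≥0∞) (he : e ≤ 1)
    (hae : ∀ᵐ t ∂(volume : Measure (EuclideanSpace ℝ (Fin k))),
      e ≤ dimH {x : EuclideanSpace ℝ (Fin n) | (t, x) ∈ B})
    (hlow : ∀ B' : Set (EuclideanSpace ℝ (Fin k) × EuclideanSpace ℝ (Fin n)),
      (∀ P ∈ E, 0 < μH[(k : ℝ)] (B' ∩ P)) → (k : ℝ≥0∞) + e ≤ dimH B')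
    (hup : dimH B ≤ (k : ℝ≥0∞) + e)
    (β : ℝ≥0∞)
    (hβdef : β = sSup {q : ℝ≥0∞ |
      (volume : Measure (EuclideanSpace ℝ (Fin k)))
        {t | q < dimH {x : EuclideanSpace ℝ (Fin n) | (t, x) ∈ B}} ≠ 0})
    (hβe : e ≤ β) :
    dimH B = (k : ℝ≥0∞) + β := by
  have hBP : ∀ P ∈ E, 0 < μH[(k : ℝ)] (B ∩ P) := by
    intro P hP
    obtain ⟨f, hf⟩ := hgraph P hP
    have hsub : P ⊆ B := by rw [hBdef]; exact subset_sUnion_of_mem hP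
    rw [inter_eq_self_of_subset_right hsub, graph_hausdorff_infinite k n hk P f hf]
    exact ENNReal.zero_lt_top
  have hdim : dimH B = (k : ℝ≥0∞) + e := le_antisymm hup (hlow B hBP)
  have hβle : β ≤ e := by
    rw [hβdef]
    refine sSup_le fun q hq => ?_
    by_contra hqe
    push_neg at hqe
    obtain ⟨dd, hdd1, hdd2⟩ := exists_between (lt_min hqe (lt_of_le_of_lt he ENNReal.one_lt_two))
    have hdd2' : dd < q := hdd2.trans_le (min_le_left _ _)
    have hddlt2 : dd < 2 := hdd2.trans_le (min_le_right _ _)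
    have hddtop : dd ≠ ∞ := (hddlt2.trans_le le_top).ne
    have hddpos : 0 < dd := lt_of_le_of_lt (zero_le) hdd1
    have hspos : (0:ℝ) < dd.toReal := ENNReal.toReal_pos hddpos.ne' hddtop
    have hμ0 : μH[((k:ℝ) + dd.toReal)] B = 0 := by
      have h1 : dimH B < (((k : ℝ≥0) + dd.toNNReal : ℝ≥0) : ℝ≥0∞) := by
        rw [hdim]
        push_cast
        rw [ENNReal.coe_toNNReal hddtop]
        exact ENNReal.add_lt_add_left (by simp) hdd1
      have h2 := hausdorffMeasure_of_dimH_lt h1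
      have h3 : (((k : ℝ≥0) + dd.toNNReal : ℝ≥0) : ℝ) = (k:ℝ) + dd.toReal := by
        push_cast
        rfl
      rwa [h3] at h2
    have hsl := fubini_slice k n hspos B hμ0
    have hdim_slice : ∀ᵐ t ∂(volume : Measure (EuclideanSpace ℝ (Fin k))),
        dimH {x : EuclideanSpace ℝ (Fin n) | (t, x) ∈ B} ≤ dd := by
      filter_upwards [hsl] with t ht
      by_contra hlt
      push_neg at hlt
      have hlt' : ((dd.toNNReal : ℝ≥0) : ℝ≥0∞)
          < dimH {x : EuclideanSpace ℝ (Fin n) | (t, x) ∈ B} := by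
        rwa [ENNReal.coe_toNNReal hddtop]
      have hinf2 := hausdorffMeasure_of_lt_dimH hlt'
      have h3 : ((dd.toNNReal : ℝ≥0) : ℝ) = dd.toReal := rfl
      rw [h3, ht] at hinf2
      exact (by simp : (0:ℝ≥0∞) ≠ ∞) hinf2
    have hnull : (volume : Measure (EuclideanSpace ℝ (Fin k)))
        {t | q < dimH {x : EuclideanSpace ℝ (Fin n) | (t, x) ∈ B}} = 0 := by
      refine measure_mono_null ?_ (ae_iff.mp hdim_slice)
      intro t ht'
      simp only [mem_setOf_eq] at ht' ⊢
      exact fun hle => absurd (lt_of_le_of_lt hle hdd2') (not_lt.2 ht'.le)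
    exact hq hnull
  have hβeq : β = e := le_antisymm hβle hβe
  rw [hdim, hβeq]
end
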